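/- arXiv:0907.0877 — 3 statements merged into one kernel-verified Lean document; each statement's English description precedes it below -/
import Mathlib

section
/- Let L₁, L₂ ⊆ {0,1}* be such that (L₁, <ₗ) and (L₂, <ₗ) are both well-ordered. Then (L₁ ∪ L₂, <ₗ) is well-ordered, and if o(Lᵢ) ≤ αᵢ where each αᵢ is an infinite limit ordinal (so 1 + αᵢ = αᵢ), then o(L₁ ∪ L₂) ≤ max(α₁ · α₂, α₂ · α₁). -/
/-- The branching (strict) order on words: `u <ₛ v` iff they have a common
prefix followed by letters `a < b`. -/
def BranchLT {A : Type*} [LinearOrder A] (u v : List A) : Prop :=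
  ∃ (w : List A) (a b : A) (u' v' : List A),
    a < b ∧ u = w ++ a :: u' ∧ v = w ++ b :: v'

/-- The proper-prefix order on words. -/
def PrefLT {A : Type*} [LinearOrder A] (u v : List A) : Prop :=
  u <+: v ∧ u ≠ v

/-- The lexicographic order: proper prefix or branching. -/
def WordLex {A : Type*} [LinearOrder A] (u v : List A) : Prop :=
  PrefLT u v ∨ BranchLT u v

/-- A prefix language: no member is a proper prefix of another member. -/
def IsPrefixLang {A : Type*} [LinearOrder A] (L : Set (List A)) : Prop :=
  ∀ u ∈ L, ∀ v : List A, u ++ v ∈ L → v = []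

/-- The lexicographic order restricted to a set of words. -/
def subLex {A : Type*} [LinearOrder A] (L : Set (List A)) : ↥L → ↥L → Prop :=
  fun a b => WordLex a.1 b.1

/-- Elementwise concatenation of two languages. -/
def LangConcat {A : Type*} (K L : Set (List A)) : Set (List A) :=
  { w | ∃ u ∈ K, ∃ v ∈ L, w = u ++ v }

/-- `n`-fold concatenation power of a language. -/
def LangPow {A : Type*} (L : Set (List A)) : ℕ → Set (List A)
  | 0 => {[]}
  | n + 1 => LangConcat L (LangPow L n)

section Aux

open Ordinal InitialSeg

universe u

/-- Natural (Hessenberg) sum of ordinals. -/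
noncomputable def nadd : Ordinal.{u} → Ordinal.{u} → Ordinal.{u}
  | a, b =>
    max (blsub.{u, u} a fun a' _ => nadd a' b) (blsub.{u, u} b fun b' _ => nadd a b')
termination_by a b => (a, b)
decreasing_by
  · exact Prod.Lex.left _ _ ‹_›
  · exact Prod.Lex.right _ ‹_›

local infixl:65 " ♯ " => nadd

theorem nadd_le_iff {a b c : Ordinal.{u}} :
    b ♯ c ≤ a ↔ (∀ b' < b, b' ♯ c < a) ∧ ∀ c' < c, b ♯ c' < a := by
  rw [nadd, max_le_iff, blsub_le_iff, blsub_le_iff]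

theorem nadd_lt_nadd_right {b c : Ordinal.{u}} (h : b < c) (a : Ordinal.{u}) :
    b ♯ a < c ♯ a := by
  conv_rhs => rw [nadd]
  exact lt_max_of_lt_left (lt_blsub (fun a' _ => a' ♯ a) b h)

theorem nadd_lt_nadd_left {b c : Ordinal.{u}} (h : b < c) (a : Ordinal.{u}) :
    a ♯ b < a ♯ c := by
  conv_rhs => rw [nadd]
  exact lt_max_of_lt_right (lt_blsub (fun b' _ => a ♯ b') b h)

theorem nadd_le_nadd_right {b c : Ordinal.{u}} (h : b ≤ c) (a : Ordinal.{u}) :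
    b ♯ a ≤ c ♯ a := by
  rcases h.lt_or_eq with h | rfl
  · exact (nadd_lt_nadd_right h a).le
  · exact le_rfl

theorem nadd_le_nadd_left {b c : Ordinal.{u}} (h : b ≤ c) (a : Ordinal.{u}) :
    a ♯ b ≤ a ♯ c := by
  rcases h.lt_or_eq with h | rfl
  · exact (nadd_lt_nadd_left h a).le
  · exact le_rfl

theorem nadd_lt_nadd_of_lt_of_le {a b c d : Ordinal.{u}} (h1 : a < b) (h2 : c ≤ d) :
    a ♯ c < b ♯ d :=
  (nadd_lt_nadd_right h1 c).trans_le (nadd_le_nadd_left h2 b)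

theorem nadd_lt_nadd_of_le_of_lt {a b c d : Ordinal.{u}} (h1 : a ≤ b) (h2 : c < d) :
    a ♯ c < b ♯ d :=
  (nadd_le_nadd_right h1 c).trans_lt (nadd_lt_nadd_left h2 b)

theorem nadd_comm (a b : Ordinal.{u}) : a ♯ b = b ♯ a := by
  induction a using Ordinal.induction generalizing b with
  | h a IHa =>
  induction b using Ordinal.induction with
  | h b IHb =>
  apply le_antisymm
  · rw [nadd_le_iff]
    constructor
    · intro a' ha; rw [IHa a' ha b]; exact nadd_lt_nadd_left ha b
    · intro b' hb; rw [IHb b' hb]; exact nadd_lt_nadd_right hb a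
  · rw [nadd_le_iff]
    constructor
    · intro b' hb; rw [← IHb b' hb]; exact nadd_lt_nadd_left hb a
    · intro a' ha; rw [← IHa a' ha b]; exact nadd_lt_nadd_right ha b

@[simp]
theorem zero_nadd_zero : (0 : Ordinal.{u}) ♯ 0 = 0 :=
  le_antisymm (nadd_le_iff.2 ⟨fun _ h => absurd h not_lt_zero,
    fun _ h => absurd h not_lt_zero⟩) zero_le

theorem lex_append {A : Type*} [LinearOrder A] :
    ∀ (u t : List A), t ≠ [] → List.Lex (· < ·) u (u ++ t) := by
  intro u
  induction u with
  | nil => intro t ht; cases t with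
    | nil => exact absurd rfl ht
    | cons a t' => exact List.Lex.nil
  | cons a u ih => intro t ht; exact List.Lex.cons (ih t ht)

theorem wordLex_iff {A : Type*} [LinearOrder A] {u v : List A} :
    WordLex u v ↔ List.Lex (· < ·) u v := by
  constructor
  · rintro (⟨⟨t, rfl⟩, hne⟩ | ⟨w, a, b, u', v', hab, rfl, rfl⟩)
    · refine lex_append u t ?_
      rintro rfl; exact hne (by simp)
    · exact List.Lex.append_left _ (List.Lex.rel hab) w
  · intro h
    induction h with
    | nil => exact Or.inl ⟨⟨_, rfl⟩, by simp⟩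
    | @rel a l₁ b l₂ h => exact Or.inr ⟨[], a, b, l₁, l₂, h, rfl, rfl⟩
    | @cons a l₁ l₂ h ih =>
      rcases ih with ⟨⟨t, rfl⟩, hne⟩ | ⟨w, x, y, u', v', hxy, rfl, rfl⟩
      · exact Or.inl ⟨⟨t, rfl⟩, fun h => hne (by injection h)⟩
      · exact Or.inr ⟨a :: w, x, y, u', v', hxy, rfl, rfl⟩

theorem wordLex_trans {A : Type*} [LinearOrder A] {u v w : List A}
    (h1 : WordLex u v) (h2 : WordLex v w) : WordLex u w := by
  rw [wordLex_iff] at *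
  exact lt_trans (α := List A) h1 h2

theorem wordLex_trichotomous {A : Type*} [LinearOrder A] (u v : List A) :
    WordLex u v ∨ u = v ∨ WordLex v u := by
  rw [wordLex_iff, wordLex_iff]
  exact trichotomous u v

private theorem nadd_decomp (γ : Ordinal) (hγ : ∀ x y, x < ω ^ γ → y < ω ^ γ → x ♯ y < ω ^ γ) :
    ∀ v : Ordinal, ∀ (q p : ℕ) (r s : Ordinal), r < ω ^ γ → s < ω ^ γ →
      (ω ^ γ * q + r) ♯ (ω ^ γ * p + s) = v →
      v ≤ ω ^ γ * (q + p : ℕ) + (r ♯ s) := by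
  intro v
  induction v using Ordinal.induction with
  | h v IHv =>
  intro q p r s hr hs hv
  have hω : (ω ^ γ : Ordinal) ≠ 0 := (opow_pos γ omega0_pos).ne'
  subst hv
  rw [nadd_le_iff]
  constructor
  · -- left: ∀ a' < ω^γ*q + r
    intro a' ha'
    have ha'q : a' < ω ^ γ * (q + 1 : ℕ) := by
      calc a' < ω ^ γ * q + r := ha'
        _ < ω ^ γ * q + ω ^ γ := by exact add_lt_add_right hr _
        _ = ω ^ γ * (q + 1 : ℕ) := by push_cast; rw [mul_add, mul_one]
    obtain ⟨k, hk⟩ : ∃ k : ℕ, a' / ω ^ γ = (k : Ordinal) :=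
      lt_omega0.1 (((Ordinal.div_lt hω).2 ha'q).trans (nat_lt_omega0 (q + 1)))
    have hkq : k < q + 1 := by
      have := (Ordinal.div_lt hω).2 ha'q
      rw [hk] at this
      exact_mod_cast this
    have hr' : a' % ω ^ γ < ω ^ γ := mod_lt a' hω
    have hdecomp : ω ^ γ * (k : ℕ) + a' % ω ^ γ = a' := by
      rw [← hk]; exact div_add_mod a' (ω ^ γ)
    have hlt : a' ♯ (ω ^ γ * p + s) < (ω ^ γ * q + r) ♯ (ω ^ γ * p + s) :=
      nadd_lt_nadd_right ha' _
    have hIH := IHv _ hlt k p (a' % ω ^ γ) s hr' hs (by rw [hdecomp])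
    rcases Nat.lt_succ_iff_lt_or_eq.1 hkq with hkq' | rfl
    · calc a' ♯ (ω ^ γ * p + s) ≤ ω ^ γ * (k + p : ℕ) + (a' % ω ^ γ ♯ s) := hIH
        _ < ω ^ γ * (k + p : ℕ) + ω ^ γ := add_lt_add_right (hγ _ _ hr' hs) _
        _ = ω ^ γ * (k + p + 1 : ℕ) := by push_cast; simp [mul_add, mul_one, add_assoc, mul_succ]
        _ ≤ ω ^ γ * (q + p : ℕ) := by
            apply mul_le_mul_right
            have : k + p + 1 ≤ q + p := by omega
            exact_mod_cast this
        _ ≤ ω ^ γ * (q + p : ℕ) + (r ♯ s) := le_self_add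
    · -- k = q : then a' % ω^γ < r
      have hrr : a' % ω ^ γ < r := by
        have : ω ^ γ * (k : ℕ) + a' % ω ^ γ < ω ^ γ * (k : ℕ) + r := by
          rw [hdecomp]; exact ha'
        exact (add_lt_add_iff_left _).1 this
      calc a' ♯ (ω ^ γ * p + s) ≤ ω ^ γ * (k + p : ℕ) + (a' % ω ^ γ ♯ s) := hIH
        _ < ω ^ γ * (k + p : ℕ) + (r ♯ s) := add_lt_add_right (nadd_lt_nadd_right hrr s) _
  · -- right: symmetric
    intro b' hb'
    have hb'p : b' < ω ^ γ * (p + 1 : ℕ) := by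
      calc b' < ω ^ γ * p + s := hb'
        _ < ω ^ γ * p + ω ^ γ := by exact add_lt_add_right hs _
        _ = ω ^ γ * (p + 1 : ℕ) := by push_cast; rw [mul_add, mul_one]
    obtain ⟨k, hk⟩ : ∃ k : ℕ, b' / ω ^ γ = (k : Ordinal) :=
      lt_omega0.1 (((Ordinal.div_lt hω).2 hb'p).trans (nat_lt_omega0 (p + 1)))
    have hkp : k < p + 1 := by
      have := (Ordinal.div_lt hω).2 hb'p
      rw [hk] at this
      exact_mod_cast this
    have hs' : b' % ω ^ γ < ω ^ γ := mod_lt b' hω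
    have hdecomp : ω ^ γ * (k : ℕ) + b' % ω ^ γ = b' := by
      rw [← hk]; exact div_add_mod b' (ω ^ γ)
    have hlt : (ω ^ γ * q + r) ♯ b' < (ω ^ γ * q + r) ♯ (ω ^ γ * p + s) :=
      nadd_lt_nadd_left hb' _
    have hIH := IHv _ hlt q k r (b' % ω ^ γ) hr hs' (by rw [hdecomp])
    rcases Nat.lt_succ_iff_lt_or_eq.1 hkp with hkp' | rfl
    · calc (ω ^ γ * q + r) ♯ b' ≤ ω ^ γ * (q + k : ℕ) + (r ♯ b' % ω ^ γ) := hIH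
        _ < ω ^ γ * (q + k : ℕ) + ω ^ γ := add_lt_add_right (hγ _ _ hr hs') _
        _ = ω ^ γ * (q + k + 1 : ℕ) := by push_cast; simp [mul_add, mul_one, add_assoc, mul_succ]
        _ ≤ ω ^ γ * (q + p : ℕ) := by
            apply mul_le_mul_right
            have : q + k + 1 ≤ q + p := by omega
            exact_mod_cast this
        _ ≤ ω ^ γ * (q + p : ℕ) + (r ♯ s) := le_self_add
    · have hss : b' % ω ^ γ < s := by
        have : ω ^ γ * (k : ℕ) + b' % ω ^ γ < ω ^ γ * (k : ℕ) + s := by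
          rw [hdecomp]; exact hb'
        exact (add_lt_add_iff_left _).1 this
      calc (ω ^ γ * q + r) ♯ b' ≤ ω ^ γ * (q + k : ℕ) + (r ♯ b' % ω ^ γ) := hIH
        _ < ω ^ γ * (q + k : ℕ) + (r ♯ s) := add_lt_add_right (nadd_lt_nadd_left hss r) _

theorem nadd_lt_opow (e : Ordinal) :
    ∀ a b, a < ω ^ e → b < ω ^ e → a ♯ b < ω ^ e := by
  induction e using Ordinal.induction with
  | h e IH =>
  rcases Ordinal.zero_or_succ_or_isSuccLimit e with rfl | ⟨γ, rfl⟩ | he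
  · intro a b ha hb
    rw [opow_zero, Ordinal.lt_one_iff_zero] at ha hb
    subst ha; subst hb
    simpa using zero_lt_one
  · intro a b ha hb
    have hγ := IH γ (Order.lt_succ γ)
    have hω : (ω ^ γ : Ordinal) ≠ 0 := (opow_pos γ omega0_pos).ne'
    rw [opow_succ] at ha hb ⊢
    obtain ⟨m', hm', ham⟩ := (lt_mul_iff_of_isSuccLimit isSuccLimit_omega0).1 ha
    obtain ⟨n', hn', hbn⟩ := (lt_mul_iff_of_isSuccLimit isSuccLimit_omega0).1 hb
    obtain ⟨m, rfl⟩ := lt_omega0.1 hm'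
    obtain ⟨n, rfl⟩ := lt_omega0.1 hn'
    obtain ⟨k, hk⟩ : ∃ k : ℕ, a / ω ^ γ = (k : Ordinal) :=
      lt_omega0.1 (((Ordinal.div_lt hω).2 ham).trans (nat_lt_omega0 m))
    obtain ⟨l, hl⟩ : ∃ l : ℕ, b / ω ^ γ = (l : Ordinal) :=
      lt_omega0.1 (((Ordinal.div_lt hω).2 hbn).trans (nat_lt_omega0 n))
    have hra : a % ω ^ γ < ω ^ γ := mod_lt a hω
    have hrb : b % ω ^ γ < ω ^ γ := mod_lt b hω
    have hda : ω ^ γ * (k : ℕ) + a % ω ^ γ = a := by rw [← hk]; exact div_add_mod a _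
    have hdb : ω ^ γ * (l : ℕ) + b % ω ^ γ = b := by rw [← hl]; exact div_add_mod b _
    have := nadd_decomp γ hγ (a ♯ b) k l (a % ω ^ γ) (b % ω ^ γ) hra hrb
      (by rw [hda, hdb])
    calc a ♯ b ≤ ω ^ γ * (k + l : ℕ) + (a % ω ^ γ ♯ b % ω ^ γ) := this
      _ < ω ^ γ * (k + l : ℕ) + ω ^ γ := add_lt_add_right (hγ _ _ hra hrb) _
      _ = ω ^ γ * (k + l + 1 : ℕ) := by push_cast; simp [mul_add, mul_one, add_assoc, mul_succ]
      _ < ω ^ γ * ω := mul_lt_mul_of_pos_left (nat_lt_omega0 _) (opow_pos γ omega0_pos)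
  · intro a b ha hb
    obtain ⟨e₁, he₁, ha₁⟩ := (lt_opow_of_isSuccLimit omega0_ne_zero he).1 ha
    obtain ⟨e₂, he₂, hb₂⟩ := (lt_opow_of_isSuccLimit omega0_ne_zero he).1 hb
    have h3 : max e₁ e₂ < e := max_lt he₁ he₂
    have := IH (max e₁ e₂) h3 a b
      (ha₁.trans_le (opow_le_opow_right omega0_pos (le_max_left _ _)))
      (hb₂.trans_le (opow_le_opow_right omega0_pos (le_max_right _ _)))
    exact this.trans_le (opow_le_opow_right omega0_pos h3.le)

theorem nadd_le_mul {a b : Ordinal} (h1 : ω ≤ a) (h2 : a ≤ b) : a ♯ b ≤ b * a := by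
  have hb0 : b ≠ 0 := by
    intro h; rw [h] at h2; exact (omega0_pos.trans_le (h1.trans h2)).ne' rfl
  refine le_of_lt ?_
  calc a ♯ b ≤ b ♯ b := nadd_le_nadd_right h2 b
    _ < ω ^ Order.succ (log ω b) :=
        nadd_lt_opow _ b b (lt_opow_succ_log_self one_lt_omega0 b)
          (lt_opow_succ_log_self one_lt_omega0 b)
    _ = ω ^ log ω b * ω := opow_succ ω _
    _ ≤ b * ω := mul_le_mul_left (opow_log_le_self ω hb0) ω
    _ ≤ b * a := mul_le_mul_right h1 b


theorem nadd_le_max_mul {α₁ α₂ : Ordinal} (h1 : ω ≤ α₁) (h2 : ω ≤ α₂) :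
    α₁ ♯ α₂ ≤ max (α₁ * α₂) (α₂ * α₁) := by
  rcases le_total α₁ α₂ with h | h
  · exact (nadd_le_mul h1 h).trans (le_max_right _ _)
  · rw [nadd_comm]
    exact (nadd_le_mul h2 h).trans (le_max_left _ _)

noncomputable def rnk {A : Type*} [LinearOrder A] (L : Set (List A))
    [IsWellOrder ↥L (subLex L)] (x : List A) : Ordinal :=
  Ordinal.type (Subrel (subLex L) (fun v : ↥L => WordLex v.1 x))

theorem rnk_le_rnk {A : Type*} [LinearOrder A] (L : Set (List A))
    [IsWellOrder ↥L (subLex L)] {x y : List A} (h : WordLex x y) :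
    rnk L x ≤ rnk L y := by
  refine RelEmbedding.ordinal_type_le ⟨⟨fun v => ⟨v.1, wordLex_trans v.2 h⟩, ?_⟩, ?_⟩
  · intro u v huv
    simpa [Subtype.ext_iff] using (Subtype.ext_iff.1 huv)
  · intro u v
    exact Iff.rfl

theorem rnk_lt_rnk {A : Type*} [LinearOrder A] (L : Set (List A))
    [IsWellOrder ↥L (subLex L)] {x y : List A} (hx : x ∈ L) (h : WordLex x y) :
    rnk L x < rnk L y := by
  refine PrincipalSeg.ordinal_type_lt
    (⟨⟨⟨fun v => ⟨v.1, wordLex_trans v.2 h⟩, ?_⟩, ?_⟩, ⟨⟨x, hx⟩, h⟩, ?_⟩ :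
      Subrel (subLex L) (fun v : ↥L => WordLex v.1 x) ≺i
        Subrel (subLex L) (fun v : ↥L => WordLex v.1 y))
  · intro u v huv
    simpa [Subtype.ext_iff] using (Subtype.ext_iff.1 huv)
  · intro u v
    exact Iff.rfl
  · intro b
    constructor
    · rintro ⟨a, rfl⟩
      exact a.2
    · intro hb
      exact ⟨⟨b.1, hb⟩, Subtype.ext rfl⟩

theorem rnk_le_type {A : Type*} [LinearOrder A] (L : Set (List A))
    [inst : IsWellOrder ↥L (subLex L)] (x : List A) :
    rnk L x ≤ Ordinal.type (subLex L) :=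
  RelEmbedding.ordinal_type_le (Subrel.relEmbedding _ _)

theorem rnk_lt_type {A : Type*} [LinearOrder A] (L : Set (List A))
    [inst : IsWellOrder ↥L (subLex L)] {x : List A} (hx : x ∈ L) :
    rnk L x < Ordinal.type (subLex L) := by
  refine PrincipalSeg.ordinal_type_lt
    (⟨Subrel.relEmbedding _ _, ⟨x, hx⟩, ?_⟩ :
      Subrel (subLex L) (fun v : ↥L => WordLex v.1 x) ≺i subLex L)
  intro b
  constructor
  · rintro ⟨a, rfl⟩
    exact a.2
  · intro hb
    exact ⟨⟨b, hb⟩, rfl⟩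


/-- If `L₁, L₂ ⊆ {0,1}*` are both well-ordered by `<ₗ`, then so is
`L₁ ∪ L₂`; moreover if `o(Lᵢ) ≤ αᵢ` with each `αᵢ` an infinite limit
ordinal, then `o(L₁ ∪ L₂) ≤ max (α₁·α₂) (α₂·α₁)`. -/
theorem stmt9 (L₁ L₂ : Set (List Bool))
    (w₁ : IsWellOrder ↥L₁ (subLex L₁)) (w₂ : IsWellOrder ↥L₂ (subLex L₂))
    (α₁ α₂ : Ordinal) (hα₁ : Order.IsSuccLimit α₁) (hα₂ : Order.IsSuccLimit α₂)
    (hα₁' : Ordinal.omega0 ≤ α₁) (hα₂' : Ordinal.omega0 ≤ α₂)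
    (hb₁ : @Ordinal.type _ _ w₁ ≤ α₁) (hb₂ : @Ordinal.type _ _ w₂ ≤ α₂) :
    ∃ w : IsWellOrder ↥(L₁ ∪ L₂) (subLex (L₁ ∪ L₂)),
      @Ordinal.type _ _ w ≤ max (α₁ * α₂) (α₂ * α₁) := by
  haveI := w₁; haveI := w₂
  set f : ↥(L₁ ∪ L₂) → Ordinal := fun x => rnk L₁ x.1 ♯ rnk L₂ x.1 with hf
  have hmono : ∀ x y : ↥(L₁ ∪ L₂), subLex (L₁ ∪ L₂) x y → f x < f y := by
    intro x y h
    rcases x.2 with hx | hx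
    · exact nadd_lt_nadd_of_lt_of_le (rnk_lt_rnk L₁ hx h) (rnk_le_rnk L₂ h)
    · exact nadd_lt_nadd_of_le_of_lt (rnk_le_rnk L₁ h) (rnk_lt_rnk L₂ hx h)
  have hbound : ∀ x : ↥(L₁ ∪ L₂), f x < α₁ ♯ α₂ := by
    intro x
    rcases x.2 with hx | hx
    · exact nadd_lt_nadd_of_lt_of_le ((rnk_lt_type L₁ hx).trans_le hb₁)
        ((rnk_le_type L₂ x.1).trans hb₂)
    · exact nadd_lt_nadd_of_le_of_lt ((rnk_le_type L₁ x.1).trans hb₁)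
        ((rnk_lt_type L₂ hx).trans_le hb₂)
  have hwf : WellFounded (subLex (L₁ ∪ L₂)) := by
    have hsub : Subrelation (subLex (L₁ ∪ L₂)) (InvImage (· < ·) f) :=
      fun {x y} h => hmono x y h
    exact Subrelation.wf hsub (InvImage.wf f Ordinal.lt_wf)
  haveI w : IsWellOrder ↥(L₁ ∪ L₂) (subLex (L₁ ∪ L₂)) :=
    { trichotomous := fun a b hab hba => by
        rcases wordLex_trichotomous a.1 b.1 with h | h | h
        · exact absurd h hab
        · exact Subtype.ext h
        · exact absurd h hba
      wf := hwf }
  refine ⟨w, ?_⟩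
  set c : Ordinal := α₁ ♯ α₂ with hc
  set g : ↥(L₁ ∪ L₂) → c.ToType := fun x => Ordinal.ToType.mk ⟨f x, hbound x⟩ with hg
  haveI : IsWellOrder c.ToType ((· < ·) : c.ToType → c.ToType → Prop) := isWellOrder_lt
  have emb : subLex (L₁ ∪ L₂) ↪r ((· < ·) : c.ToType → c.ToType → Prop) :=
    RelEmbedding.ofMonotone g (fun a b h => by
      simp only [hg, OrderIso.lt_iff_lt]
      exact Subtype.mk_lt_mk.2 (hmono a b h))
  have htype := emb.ordinal_type_le
  rw [Ordinal.type_toType] at htype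
  exact htype.trans (nadd_le_max_mul hα₁' hα₂')

end Aux
end

section
/- In an ordinal grammar, suppose X ⇒* u·X·p (u a nonempty terminal word) and X ⇒* v with v a terminal word. Then either v <ₛ u or u is a proper prefix of v. -/
/-- A context-free grammar over the terminal alphabet `{0,1}` (= `Bool`,
with `false = 0 < 1 = true`), with nonterminals `N`. -/
structure CFG (N : Type) where
  start : N
  prods : N → Set (List (N ⊕ Bool))

/-- One derivation step: replace an occurrence of a nonterminal by the
right-hand side of one of its productions. -/
def CFG.Step {N : Type} (G : CFG N) (p q : List (N ⊕ Bool)) : Prop :=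
  ∃ (l r : List (N ⊕ Bool)) (X : N) (w : List (N ⊕ Bool)),
    p = l ++ Sum.inl X :: r ∧ w ∈ G.prods X ∧ q = l ++ w ++ r

/-- Derivation: the reflexive-transitive closure of `Step`. -/
def CFG.Derives {N : Type} (G : CFG N) : List (N ⊕ Bool) → List (N ⊕ Bool) → Prop :=
  Relation.ReflTransGen G.Step

/-- View a terminal word as a sentential form. -/
def liftWord {N : Type} (u : List Bool) : List (N ⊕ Bool) := u.map Sum.inr

/-- The language of terminal words derivable from a sentential form `q`. -/
def CFG.lang {N : Type} (G : CFG N) (q : List (N ⊕ Bool)) : Set (List Bool) :=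
  { u | G.Derives q (liftWord u) }

/-- The language of a nonterminal. -/
def CFG.langN {N : Type} (G : CFG N) (X : N) : Set (List Bool) :=
  G.lang [Sum.inl X]

/-- A nonterminal is accessible if it occurs in some sentential form
derivable from the start symbol. -/
def CFG.Accessible {N : Type} (G : CFG N) (X : N) : Prop :=
  ∃ q r : List (N ⊕ Bool), G.Derives [Sum.inl G.start] (q ++ Sum.inl X :: r)

lemma step_left {N : Type} (G : CFG N) (l : List (N ⊕ Bool)) {p q : List (N ⊕ Bool)}
    (h : G.Step p q) : G.Step (l ++ p) (l ++ q) := by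
  obtain ⟨a, r, Y, w, hp, hw, hq⟩ := h
  exact ⟨l ++ a, r, Y, w, by simp [hp], hw, by simp [hq]⟩

lemma step_right {N : Type} (G : CFG N) (l : List (N ⊕ Bool)) {p q : List (N ⊕ Bool)}
    (h : G.Step p q) : G.Step (p ++ l) (q ++ l) := by
  obtain ⟨a, r, Y, w, hp, hw, hq⟩ := h
  exact ⟨a, r ++ l, Y, w, by simp [hp], hw, by simp [hq]⟩

lemma derives_append {N : Type} (G : CFG N) {p q p' q' : List (N ⊕ Bool)}
    (h : G.Derives p q) (h' : G.Derives p' q') : G.Derives (p ++ p') (q ++ q') := by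
  have h1 : G.Derives (p ++ p') (q ++ p') := by
    induction h with
    | refl => exact .refl
    | tail _ hs ih => exact ih.tail (step_right G p' hs)
  have h2 : G.Derives (q ++ p') (q ++ q') := by
    induction h' with
    | refl => exact .refl
    | tail _ hs ih => exact ih.tail (step_left G q hs)
  exact h1.trans h2

lemma derives_terminal {N : Type} (G : CFG N) (hco : ∀ X : N, (G.langN X).Nonempty)
    (s : List (N ⊕ Bool)) : ∃ t : List Bool, G.Derives s (liftWord t) := by
  induction s with
  | nil => exact ⟨[], .refl⟩
  | cons hd tl ih =>
    obtain ⟨t, ht⟩ := ih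
    cases hd with
    | inl Y =>
      obtain ⟨v, hv⟩ := hco Y
      refine ⟨v ++ t, ?_⟩
      have := derives_append G hv ht
      simpa [liftWord] using this
    | inr b =>
      refine ⟨b :: t, ?_⟩
      have : G.Derives ([Sum.inr b] ++ tl) ([Sum.inr b] ++ liftWord t) :=
        derives_append G .refl ht
      simpa [liftWord] using this

lemma branch_append {u v : List Bool} (l s t : List Bool) (h : BranchLT u v) :
    BranchLT (l ++ u ++ s) (l ++ v ++ t) := by
  obtain ⟨w, x, y, u', v', hxy, hu, hv⟩ := h
  exact ⟨l ++ w, x, y, u' ++ s, v' ++ t, hxy, by simp [hu], by simp [hv]⟩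

lemma branch_cons {a : Bool} {u v : List Bool} (h : BranchLT u v) :
    BranchLT (a :: u) (a :: v) := by
  obtain ⟨w, x, y, u', v', hxy, hu, hv⟩ := h
  exact ⟨a :: w, x, y, u', v', hxy, by simp [hu], by simp [hv]⟩

lemma word_trichotomy (u v : List Bool) :
    BranchLT v u ∨ PrefLT u v ∨ BranchLT u v ∨ v <+: u := by
  induction u generalizing v with
  | nil =>
    cases v with
    | nil => exact Or.inr (Or.inr (Or.inr List.prefix_rfl))
    | cons b v' => exact Or.inr (Or.inl ⟨List.nil_prefix, by simp⟩)
  | cons a u' ih =>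
    cases v with
    | nil => exact Or.inr (Or.inr (Or.inr (List.nil_prefix)))
    | cons b v' =>
      rcases lt_trichotomy a b with h | h | h
      · exact Or.inr (Or.inr (Or.inl ⟨[], a, b, u', v', h, rfl, rfl⟩))
      · subst h
        rcases ih v' with H | H | H | H
        · exact Or.inl (branch_cons H)
        · exact Or.inr (Or.inl ⟨(List.prefix_cons_inj a).mpr H.1, by
            intro hc; exact H.2 (by injection hc)⟩)
        · exact Or.inr (Or.inr (Or.inl (branch_cons H)))
        · exact Or.inr (Or.inr (Or.inr ((List.prefix_cons_inj a).mpr H)))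
      · exact Or.inl ⟨[], b, a, v', u', h, rfl, rfl⟩

lemma rep_succ' {α : Type*} (n : ℕ) (l : List α) :
    (List.replicate (n+1) l).flatten = (List.replicate n l).flatten ++ l := by
  rw [List.replicate_succ', List.flatten_append]; simp

lemma pump {N : Type} (G : CFG N) {X : N} {u v w : List Bool} {p : List (N ⊕ Bool)}
    (hu : G.Derives [Sum.inl X] (liftWord u ++ Sum.inl X :: p))
    (hp : G.Derives p (liftWord w))
    (hv : G.Derives [Sum.inl X] (liftWord v)) (n : ℕ) :
    G.Derives [Sum.inl X]
      (liftWord ((List.replicate n u).flatten ++ v ++ (List.replicate n w).flatten)) := by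
  induction n with
  | zero => simpa using hv
  | succ n ih =>
    have h1 : G.Derives [Sum.inl X] ((liftWord u ++ [Sum.inl X]) ++ p) := by
      simpa using hu
    have h2 : G.Derives ((liftWord u ++ [Sum.inl X]) ++ p)
        ((liftWord u ++ liftWord ((List.replicate n u).flatten ++ v ++ (List.replicate n w).flatten)) ++ liftWord w) :=
      derives_append G (derives_append G .refl ih) hp
    have h3 := h1.trans h2
    have heq : ((liftWord u : List (N ⊕ Bool)) ++ liftWord ((List.replicate n u).flatten ++ v ++ (List.replicate n w).flatten)) ++ liftWord w
        = liftWord ((List.replicate (n+1) u).flatten ++ v ++ (List.replicate (n+1) w).flatten) := by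
      rw [List.replicate_succ, List.flatten_cons, rep_succ']
      simp [liftWord, List.append_assoc]
    rwa [heq] at h3

/-- In an ordinal grammar, if X ⇒* u·X·p with u a nonempty terminal word and
X ⇒* v with v a terminal word, then either v <ₛ u or u is a proper prefix
of v. -/
theorem stmt16 {N : Type} (G : CFG N)
    (hacc : ∀ X : N, G.Accessible X)
    (hco : ∀ X : N, (G.langN X).Nonempty)
    (hpre : ∀ X : N, IsPrefixLang (G.langN X))
    (htwo : ∀ X : N, ∃ u v : List Bool, u ∈ G.langN X ∧ v ∈ G.langN X ∧ u ≠ v)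
    (hwo : IsWellOrder ↥(G.langN G.start) (subLex (G.langN G.start)))
    (X : N) (u v : List Bool) (p : List (N ⊕ Bool))
    (hne : u ≠ [])
    (hu : G.Derives [Sum.inl X] (liftWord u ++ Sum.inl X :: p))
    (hv : v ∈ G.langN X) :
    BranchLT v u ∨ PrefLT u v := by
  obtain ⟨w, hw⟩ := derives_terminal G hco p
  have hv' : G.Derives [Sum.inl X] (liftWord v) := hv
  have hpump : ∀ n, (List.replicate n u).flatten ++ v ++ (List.replicate n w).flatten ∈ G.langN X :=
    fun n => pump G hu hw hv' n
  rcases word_trichotomy u v with H | H | H | H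
  · exact Or.inl H
  · exact Or.inr H
  · -- BranchLT u v : contradiction via the well-order on L(start)
    exfalso
    obtain ⟨qX, rX, hXs⟩ := hacc X
    obtain ⟨q0, hq0⟩ := derives_terminal G hco qX
    obtain ⟨r0, hr0⟩ := derives_terminal G hco rX
    set a : ℕ → List Bool :=
      fun n => (List.replicate n u).flatten ++ v ++ (List.replicate n w).flatten with ha
    have hmem : ∀ n, q0 ++ a n ++ r0 ∈ G.langN G.start := by
      intro n
      have h1 : G.Derives (qX ++ Sum.inl X :: rX) (liftWord (q0 ++ a n ++ r0)) := by
        have h2 : G.Derives (qX ++ ([Sum.inl X] ++ rX))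
            (liftWord q0 ++ (liftWord (a n) ++ liftWord r0)) :=
          derives_append G hq0 (derives_append G (hpump n) hr0)
        simpa [liftWord] using h2
      exact hXs.trans h1
    have hdec : ∀ n, BranchLT (a (n+1)) (a n) := by
      intro n
      have hb := branch_append (List.replicate n u).flatten
        (v ++ (List.replicate n w).flatten ++ w) (List.replicate n w).flatten H
      have e1 : a (n+1) = (List.replicate n u).flatten ++ u ++
          (v ++ (List.replicate n w).flatten ++ w) := by
        simp only [ha, rep_succ', List.append_assoc]
      have e2 : a n = (List.replicate n u).flatten ++ v ++ (List.replicate n w).flatten := rfl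
      rw [e1, e2]
      exact hb
    set f : ℕ → ↥(G.langN G.start) := fun n => ⟨q0 ++ a n ++ r0, hmem n⟩ with hf
    have hstep : ∀ n, subLex (G.langN G.start) (f (n+1)) (f n) := by
      intro n
      exact Or.inr (branch_append q0 r0 r0 (hdec n))
    have wf := hwo.toIsWellFounded.wf
    obtain ⟨m, hm, hmin⟩ := wf.has_min (Set.range f) ⟨f 0, 0, rfl⟩
    obtain ⟨n, rfl⟩ := hm
    exact hmin (f (n+1)) ⟨n+1, rfl⟩ (hstep n)
  · -- v is a prefix of u : contradicts the prefix property
    exfalso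
    obtain ⟨s, hs⟩ := H
    have h1 : u ++ v ++ w ∈ G.langN X := by
      have := hpump 1
      simpa using this
    have h2 : v ++ (s ++ (v ++ w)) ∈ G.langN X := by
      have e : v ++ (s ++ (v ++ w)) = u ++ v ++ w := by
        rw [← hs]; simp [List.append_assoc]
      rwa [e]
    have h3 := hpre X v hv _ h2
    rcases List.append_eq_nil_iff.mp h3 with ⟨hs0, hvw⟩
    rcases List.append_eq_nil_iff.mp hvw with ⟨hv0, -⟩
    apply hne
    rw [← hs, hv0, hs0]
    rfl
end

section
/- Let X be a recursive nonterminal of an ordinal grammar, i.e., X ⇒* p·X·q nontrivially for some p, q. Then there is a unique primitive word u₀ ∈ {0,1}⁺ such that whenever X ⇒* u·X·p with u a nonempty terminal word, u is a power of u₀. -/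
/-- The `n`-fold concatenation power of a word. -/
def wordPow (v : List Bool) : ℕ → List Bool
  | 0 => []
  | n + 1 => v ++ wordPow v n

/-- A primitive word: a nonempty word that is not a proper power. -/
def PrimitiveWord (w : List Bool) : Prop :=
  w ≠ [] ∧ ∀ (v : List Bool) (n : ℕ), 2 ≤ n → w ≠ wordPow v n

lemma wordPow_nil (n : ℕ) : wordPow [] n = [] := by
  induction n with
  | zero => rfl
  | succ n ih => simp [wordPow, ih]

lemma wordPow_length (v : List Bool) (n : ℕ) : (wordPow v n).length = n * v.length := by
  induction n with
  | zero => simp [wordPow]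
  | succ n ih => simp [wordPow, ih, Nat.succ_mul]; ring

lemma wordPow_add (v : List Bool) (a b : ℕ) :
    wordPow v (a + b) = wordPow v a ++ wordPow v b := by
  induction a with
  | zero => simp [wordPow]
  | succ a ih => simp only [wordPow, Nat.succ_add, ih, List.append_assoc]

lemma wordPow_one (v : List Bool) : wordPow v 1 = v := by simp [wordPow]

lemma wordPow_succ' (v : List Bool) (n : ℕ) : wordPow v (n + 1) = wordPow v n ++ v := by
  rw [wordPow_add, wordPow_one]

lemma wordPow_comm (v : List Bool) (n : ℕ) :
    v ++ wordPow v n = wordPow v n ++ v := by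
  rw [← wordPow, ← wordPow_succ']

lemma comm_wordPow {x y : List Bool} (h : x ++ y = y ++ x) (n : ℕ) :
    x ++ wordPow y n = wordPow y n ++ x := by
  induction n with
  | zero => simp [wordPow]
  | succ n ih =>
    simp only [wordPow, ← List.append_assoc, h]
    simp only [List.append_assoc, ih]

def Cw (w : List Bool) : Set (List Bool) := {x | x ≠ [] ∧ x ++ w = w ++ x}

lemma Cw_comm_pow {w x : List Bool} (hx : x ∈ Cw w) (k : ℕ) :
    x ++ wordPow w k = wordPow w k ++ x := comm_wordPow hx.2 k

lemma Cw_take {w x : List Bool} (hw : w ≠ []) (hx : x ∈ Cw w) (k : ℕ)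
    (hk : x.length ≤ k * w.length) : x = (wordPow w k).take x.length := by
  have h := Cw_comm_pow hx k
  have h1 : x = (x ++ wordPow w k).take x.length := by simp
  rw [h] at h1
  rwa [List.take_append_of_le_length (by rwa [wordPow_length])] at h1

lemma Cw_prefix {w x y : List Bool} (hw : w ≠ []) (hx : x ∈ Cw w) (hy : y ∈ Cw w)
    (hxy : x.length ≤ y.length) : x <+: y := by
  have hwl : 1 ≤ w.length := List.length_pos_iff.mpr hw
  have hx' := Cw_take hw hx y.length (le_trans hxy (by nlinarith))
  have hy' := Cw_take hw hy y.length (by nlinarith)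
  have h2 : y.take x.length = x := by
    conv_lhs => rw [hy']
    rw [List.take_take, min_eq_left hxy, ← hx']
  rw [← h2]; exact List.take_prefix _ _

lemma Cw_eq {w x y : List Bool} (hw : w ≠ []) (hx : x ∈ Cw w) (hy : y ∈ Cw w)
    (hxy : x.length = y.length) : x = y :=
  List.IsPrefix.eq_of_length (Cw_prefix hw hx hy hxy.le) hxy

lemma Cw_drop {w x y : List Bool} (hw : w ≠ []) (hx : x ∈ Cw w) (hy : y ∈ Cw w)
    (hxy : x.length < y.length) :
    y.drop x.length ∈ Cw w ∧ y = x ++ y.drop x.length := by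
  have hpre : x <+: y := Cw_prefix hw hx hy hxy.le
  obtain ⟨t, ht⟩ := hpre
  have hdrop : y.drop x.length = t := by rw [← ht, List.drop_left]
  have htne : t ≠ [] := by
    intro h; rw [h, List.append_nil] at ht; rw [ht] at hxy; exact lt_irrefl _ hxy
  refine ⟨⟨hdrop ▸ htne, ?_⟩, by rw [hdrop, ht]⟩
  rw [hdrop]
  -- t ++ w = w ++ t from (x++t)++w = w++(x++t) and x++w = w++x
  have h1 : x ++ (t ++ w) = x ++ (w ++ t) := by
    have := hy.2
    rw [← ht] at this
    calc x ++ (t ++ w) = (x ++ t) ++ w := by rw [List.append_assoc]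
      _ = w ++ (x ++ t) := this
      _ = (w ++ x) ++ t := by rw [List.append_assoc]
      _ = (x ++ w) ++ t := by rw [hx.2]
      _ = x ++ (w ++ t) := by rw [List.append_assoc]
  exact List.append_cancel_left h1

lemma Cw_min (w : List Bool) (hw : w ≠ []) :
    ∃ z ∈ Cw w, ∀ y ∈ Cw w, z.length ≤ y.length := by
  have hne : {n | ∃ x ∈ Cw w, x.length = n}.Nonempty := ⟨w.length, w, ⟨hw, rfl⟩, rfl⟩
  obtain ⟨x, hx, hxn⟩ := Nat.sInf_mem hne
  exact ⟨x, hx, fun y hy => hxn ▸ Nat.sInf_le ⟨y, hy, rfl⟩⟩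

lemma Cw_pow {w : List Bool} (hw : w ≠ []) {z : List Bool} (hz : z ∈ Cw w)
    (hmin : ∀ y ∈ Cw w, z.length ≤ y.length) :
    ∀ x ∈ Cw w, ∃ a, 1 ≤ a ∧ x = wordPow z a := by
  suffices H : ∀ n x, x ∈ Cw w → x.length = n → ∃ a, 1 ≤ a ∧ x = wordPow z a by
    exact fun x hx => H x.length x hx rfl
  intro n
  induction n using Nat.strong_induction_on with
  | _ n ih =>
  intro x hx hn
  subst hn
  rcases eq_or_lt_of_le (hmin x hx) with heq | hlt
  · exact ⟨1, le_refl _, by rw [wordPow_one, Cw_eq hw hx hz heq.symm]⟩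
  · obtain ⟨hx2, hsplit⟩ := Cw_drop hw hz hx hlt
    have hzl : 0 < z.length := List.length_pos_iff.mpr hz.1
    have hlen : (x.drop z.length).length < x.length := by
      rw [List.length_drop]; omega
    obtain ⟨a, ha1, ha⟩ := ih _ hlen _ hx2 rfl
    exact ⟨a + 1, by omega, by rw [hsplit, ha]; rfl⟩


lemma branch_of_ne : ∀ (u v : List Bool), u.length = v.length → u ≠ v →
    BranchLT u v ∨ BranchLT v u := by
  intro u
  induction u with
  | nil => intro v hl hne; cases v with
    | nil => exact absurd rfl hne
    | cons b v' => simp at hl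
  | cons a u' ih =>
    intro v hl hne
    cases v with
    | nil => simp at hl
    | cons b v' =>
      by_cases hab : a = b
      · subst hab
        have hne' : u' ≠ v' := fun h => hne (by rw [h])
        rcases ih v' (by simpa using hl) hne' with ⟨w,c,d,x,y,hcd,hu,hv⟩ | ⟨w,c,d,x,y,hcd,hu,hv⟩
        · exact Or.inl ⟨a :: w, c, d, x, y, hcd, by simp [hu], by simp [hv]⟩
        · exact Or.inr ⟨a :: w, c, d, x, y, hcd, by simp [hu], by simp [hv]⟩
      · rcases lt_or_gt_of_ne hab with h | h
        · exact Or.inl ⟨[], a, b, u', v', h, rfl, rfl⟩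
        · exact Or.inr ⟨[], b, a, v', u', h, rfl, rfl⟩

lemma no_descending {α : Type*} {r : α → α → Prop} (wf : WellFounded r)
    (f : ℕ → α) (h : ∀ n, r (f (n + 1)) (f n)) : False := by
  obtain ⟨m, ⟨n, hn⟩, hmin⟩ := wf.has_min (Set.range f) ⟨f 0, 0, rfl⟩
  exact hmin (f (n + 1)) ⟨n + 1, rfl⟩ (hn ▸ h n)

section Gram
variable {N : Type} (G : CFG N)

lemma step_context {p q : List (N ⊕ Bool)} (h : G.Step p q) (l r : List (N ⊕ Bool)) :
    G.Step (l ++ p ++ r) (l ++ q ++ r) := by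
  obtain ⟨l', r', Y, w, hp, hw, hq⟩ := h
  exact ⟨l ++ l', r' ++ r, Y, w, by simp [hp, List.append_assoc],
    hw, by simp [hq, List.append_assoc]⟩

lemma derives_context {p q : List (N ⊕ Bool)} (h : G.Derives p q) (l r : List (N ⊕ Bool)) :
    G.Derives (l ++ p ++ r) (l ++ q ++ r) := by
  induction h with
  | refl => exact Relation.ReflTransGen.refl
  | tail _ hstep ih => exact ih.tail (step_context G hstep l r)

lemma derives_append_s17 {a b c d : List (N ⊕ Bool)} (h1 : G.Derives a b) (h2 : G.Derives c d) :
    G.Derives (a ++ c) (b ++ d) := by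
  have s1 : G.Derives (a ++ c) (b ++ c) := by
    simpa using derives_context G h1 [] c
  have s2 : G.Derives (b ++ c) (b ++ d) := by
    simpa using derives_context G h2 b []
  exact s1.trans s2

lemma liftWord_append (u v : List Bool) :
    (liftWord (u ++ v) : List (N ⊕ Bool)) = liftWord u ++ liftWord v := by
  simp [liftWord]

-- every sentential form derives some terminal word, nonempty if the form is nonempty
lemma lang_nonempty (htwo : ∀ Y : N, ∃ u v : List Bool, u ∈ G.langN Y ∧ v ∈ G.langN Y ∧ u ≠ v) :
    ∀ q : List (N ⊕ Bool), ∃ α : List Bool, G.Derives q (liftWord α) ∧ (q ≠ [] → α ≠ []) := by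
  intro q
  induction q with
  | nil => exact ⟨[], Relation.ReflTransGen.refl, fun h => absurd rfl h⟩
  | cons s q' ih =>
    obtain ⟨α, hα, _⟩ := ih
    cases s with
    | inr b =>
      refine ⟨b :: α, ?_, fun _ => by simp⟩
      have : (liftWord (b :: α) : List (N ⊕ Bool)) = [Sum.inr b] ++ liftWord α := by
        simp [liftWord]
      rw [this]
      have := derives_append_s17 G (Relation.ReflTransGen.refl (a := [Sum.inr b])) hα
      simpa using this
    | inl Y =>
      obtain ⟨u, v, hu, hv, huv⟩ := htwo Y
      have : ∃ w : List Bool, w ∈ G.langN Y ∧ w ≠ [] := by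
        by_cases h : u = []
        · exact ⟨v, hv, fun hv0 => huv (h.trans hv0.symm)⟩
        · exact ⟨u, hu, h⟩
      obtain ⟨w, hw, hwne⟩ := this
      refine ⟨w ++ α, ?_, fun _ => by simp [hwne]⟩
      rw [liftWord_append]
      have : (Sum.inl Y :: q' : List (N ⊕ Bool)) = [Sum.inl Y] ++ q' := rfl
      rw [this]
      exact derives_append_s17 G hw hα

end Gram

section Pump
variable {N : Type} (G : CFG N) (X : N)

def Pumps (u : List Bool) : Prop :=
  ∃ p : List (N ⊕ Bool), G.Derives [Sum.inl X] (liftWord u ++ Sum.inl X :: p)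

lemma pump_concat {u v : List Bool} (h1 : Pumps G X u) (h2 : Pumps G X v) :
    Pumps G X (u ++ v) := by
  obtain ⟨p, hp⟩ := h1
  obtain ⟨q, hq⟩ := h2
  refine ⟨q ++ p, hp.trans ?_⟩
  have h := derives_context G hq (liftWord u) p
  have e1 : liftWord u ++ [Sum.inl X] ++ p = liftWord u ++ Sum.inl X :: p := by simp
  have e2 : liftWord u ++ (liftWord v ++ Sum.inl X :: q) ++ p
      = (liftWord (u ++ v) : List (N ⊕ Bool)) ++ Sum.inl X :: (q ++ p) := by
    simp [liftWord_append]
  rw [e1, e2] at h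
  exact h

lemma pump_pow {u : List Bool} (h : Pumps G X u) : ∀ k, Pumps G X (wordPow u k) := by
  intro k
  induction k with
  | zero => exact ⟨[], Relation.ReflTransGen.refl⟩
  | succ k ih => exact pump_concat G X h ih

lemma pump_member (hco : ∀ Y : N, (G.langN Y).Nonempty)
    (htwo : ∀ Y : N, ∃ u v : List Bool, u ∈ G.langN Y ∧ v ∈ G.langN Y ∧ u ≠ v)
    {u : List Bool} (h : Pumps G X u) :
    ∃ t : List Bool, (u ++ t) ∈ G.langN X := by
  obtain ⟨p, hp⟩ := h
  obtain ⟨w₀, hw₀⟩ := hco X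
  obtain ⟨α, hα, -⟩ := lang_nonempty G htwo p
  refine ⟨w₀ ++ α, ?_⟩
  have h2 : G.Derives ([Sum.inl X] ++ p) (liftWord w₀ ++ liftWord α) := derives_append_s17 G hw₀ hα
  have h3 := derives_context G h2 (liftWord u) []
  simp only [List.append_nil] at h3
  have e1 : liftWord u ++ ([Sum.inl X] ++ p) = liftWord u ++ Sum.inl X :: p := by simp
  rw [e1] at h3
  have : G.Derives [Sum.inl X] (liftWord u ++ (liftWord w₀ ++ liftWord α)) := hp.trans h3
  simpa [CFG.langN, CFG.lang, liftWord_append, List.append_assoc] using this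

-- no two pumping words branch
lemma pump_no_branch (hacc : G.Accessible X)
    (hco : ∀ Y : N, (G.langN Y).Nonempty)
    (htwo : ∀ Y : N, ∃ u v : List Bool, u ∈ G.langN Y ∧ v ∈ G.langN Y ∧ u ≠ v)
    (hwo : IsWellOrder ↥(G.langN G.start) (subLex (G.langN G.start)))
    {z z' : List Bool} (hz : Pumps G X z) (hz' : Pumps G X z')
    (hb : BranchLT z z') : False := by
  obtain ⟨qa, ra, hqa⟩ := hacc
  obtain ⟨α₀, hα₀, -⟩ := lang_nonempty G htwo qa
  obtain ⟨β₀, hβ₀, -⟩ := lang_nonempty G htwo ra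
  have hk : ∀ k : ℕ, ∃ m : ↥(G.langN G.start), ∃ t : List Bool,
      m.1 = α₀ ++ wordPow z k ++ (z' ++ t) := by
    intro k
    have hp : Pumps G X (wordPow z k ++ z') :=
      pump_concat G X (pump_pow G X hz k) hz'
    obtain ⟨t', ht'⟩ := pump_member G X hco htwo hp
    -- membership in lang start
    have hmid : G.Derives [Sum.inl X] (liftWord (wordPow z k ++ z' ++ t')) := ht'
    have h1 : G.Derives (qa ++ [Sum.inl X] ++ ra)
        (liftWord α₀ ++ liftWord (wordPow z k ++ z' ++ t') ++ liftWord β₀) :=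
      derives_append_s17 G (derives_append_s17 G hα₀ hmid) hβ₀
    have e1 : qa ++ [Sum.inl X] ++ ra = qa ++ Sum.inl X :: ra := by simp
    rw [e1] at h1
    have hm : (α₀ ++ (wordPow z k ++ z' ++ t') ++ β₀) ∈ G.langN G.start := by
      have : G.Derives [Sum.inl G.start]
          (liftWord (α₀ ++ (wordPow z k ++ z' ++ t') ++ β₀)) := by
        rw [liftWord_append, liftWord_append]
        exact hqa.trans h1
      exact this
    exact ⟨⟨_, hm⟩, t' ++ β₀, by simp [List.append_assoc]⟩
  choose f t hf using hk
  obtain ⟨c, a, b, x, y, hab, hza, hzb⟩ := hb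
  refine no_descending hwo.toIsWellFounded.wf f (fun k => ?_)
  refine Or.inr ⟨α₀ ++ wordPow z k ++ c, a, b, x ++ (z' ++ t (k+1)), y ++ t k, hab, ?_, ?_⟩
  · rw [hf (k+1), wordPow_succ', hza]
    simp [List.append_assoc]
  · rw [hf k, hzb]
    simp [List.append_assoc]

end Pump

/-- If X is a recursive nonterminal of an ordinal grammar (X ⇒* p·X·q
nontrivially), then there is a unique primitive word u₀ such that whenever
X ⇒* u·X·p with u a nonempty terminal word, u is a power of u₀. -/
theorem stmt17 {N : Type} (G : CFG N)
    (hacc : ∀ X : N, G.Accessible X)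
    (hco : ∀ X : N, (G.langN X).Nonempty)
    (hpre : ∀ X : N, IsPrefixLang (G.langN X))
    (htwo : ∀ X : N, ∃ u v : List Bool, u ∈ G.langN X ∧ v ∈ G.langN X ∧ u ≠ v)
    (hwo : IsWellOrder ↥(G.langN G.start) (subLex (G.langN G.start)))
    (X : N)
    (hrec : ∃ p q : List (N ⊕ Bool),
      G.Derives [Sum.inl X] (p ++ Sum.inl X :: q) ∧
      p ++ Sum.inl X :: q ≠ [Sum.inl X]) :
    ∃! u₀ : List Bool, PrimitiveWord u₀ ∧
      ∀ (u : List Bool) (p : List (N ⊕ Bool)), u ≠ [] →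
        G.Derives [Sum.inl X] (liftWord u ++ Sum.inl X :: p) →
        ∃ n : ℕ, 1 ≤ n ∧ u = wordPow u₀ n := by
  classical
  -- Step 1: produce a nonempty pumping word u₁
  obtain ⟨p, q, hd, hnontriv⟩ := hrec
  have hu₁ : ∃ u₁ : List Bool, u₁ ≠ [] ∧ Pumps G X u₁ := by
    by_cases hp : p = []
    · -- left part empty: contradiction with prefix-language property
      exfalso
      subst hp
      have hq : q ≠ [] := by
        intro h; subst h; exact hnontriv rfl
      obtain ⟨β, hβ, hβne⟩ := lang_nonempty G htwo q
      obtain ⟨w₀, hw₀⟩ := hco X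
      have h1 : G.Derives ([Sum.inl X] ++ q) (liftWord w₀ ++ liftWord β) :=
        derives_append_s17 G hw₀ hβ
      have h2 : G.Derives [Sum.inl X] (liftWord (w₀ ++ β)) := by
        rw [liftWord_append]
        refine Relation.ReflTransGen.trans ?_ h1
        simpa [CFG.Derives] using hd
      have hmem : (w₀ ++ β) ∈ G.langN X := h2
      exact (hβne hq) (hpre X w₀ hw₀ β hmem)
    · obtain ⟨α, hα, hαne⟩ := lang_nonempty G htwo p
      refine ⟨α, hαne hp, q, ?_⟩
      refine hd.trans ?_
      have := derives_context G hα [] (Sum.inl X :: q)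
      simpa [CFG.Derives] using this
  obtain ⟨u₁, hu₁ne, hu₁p⟩ := hu₁
  -- Step 2: comparability / commutation
  have heqlen : ∀ u v : List Bool, u ≠ [] → Pumps G X u → v ≠ [] → Pumps G X v →
      u.length = v.length → u = v := by
    intro u v hun hup hvn hvp hl
    by_contra hne
    rcases branch_of_ne u v hl hne with hb | hb
    · exact pump_no_branch G X (hacc X) hco htwo hwo hup hvp hb
    · exact pump_no_branch G X (hacc X) hco htwo hwo hvp hup hb
  have hcomm : ∀ u : List Bool, u ≠ [] → Pumps G X u → u ++ u₁ = u₁ ++ u := by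
    intro u hun hup
    refine heqlen (u ++ u₁) (u₁ ++ u) (by simp [hun]) (pump_concat G X hup hu₁p)
      (by simp [hu₁ne]) (pump_concat G X hu₁p hup) (by simp [Nat.add_comm])
  have hCw : ∀ u : List Bool, u ≠ [] → Pumps G X u → u ∈ Cw u₁ :=
    fun u hun hup => ⟨hun, hcomm u hun hup⟩
  -- Step 3: minimal element of the centralizer
  obtain ⟨z, hzC, hzmin⟩ := Cw_min u₁ hu₁ne
  have hpow := Cw_pow hu₁ne hzC hzmin
  -- u₁ itself is in the centralizer
  have hu₁C : u₁ ∈ Cw u₁ := ⟨hu₁ne, rfl⟩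
  obtain ⟨b, hb1, hbu₁⟩ := hpow u₁ hu₁C
  -- Step 4: z is primitive
  have hzprim : PrimitiveWord z := by
    refine ⟨hzC.1, ?_⟩
    intro v n hn hzv
    have hvne : v ≠ [] := by
      intro h; subst h; rw [wordPow_nil] at hzv; exact hzC.1 hzv
    have hvz : v ++ z = z ++ v := by
      rw [hzv]; exact wordPow_comm v n
    have hvC : v ∈ Cw u₁ := by
      refine ⟨hvne, ?_⟩
      rw [hbu₁]
      exact comm_wordPow hvz b
    have hle := hzmin v hvC
    have : z.length = n * v.length := by rw [hzv, wordPow_length]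
    have hv1 : 1 ≤ v.length := List.length_pos_iff.mpr hvne
    have : v.length < z.length := by nlinarith
    omega
  -- Step 5: the ∃!
  refine ⟨z, ⟨hzprim, ?_⟩, ?_⟩
  · intro u pp hun hder
    obtain ⟨a, ha1, ha⟩ := hpow u (hCw u hun ⟨pp, hder⟩)
    exact ⟨a, ha1, ha⟩
  · intro t ⟨htprim, htprop⟩
    obtain ⟨p₁, hp₁⟩ := hu₁p
    obtain ⟨m, hm1, hmu₁⟩ := htprop u₁ p₁ hu₁ne hp₁
    have htC : t ∈ Cw u₁ := by
      refine ⟨htprim.1, ?_⟩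
      rw [hmu₁]
      exact wordPow_comm t m
    obtain ⟨k, hk1, hk⟩ := hpow t htC
    rcases Nat.lt_or_ge k 2 with h2 | h2
    · interval_cases k
      · rw [hk, wordPow_one]
    · exact absurd hk (htprim.2 z k h2)
end
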